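/- Let A ∈ ℝ^{n×n} with ‖A‖ > 0, b ∈ ℝ^n, U ⊆ ℝ^m ⊆ ℝ^n a compact convex set, X₀ ⊆ ℝ^n compact convex, and τ > 0. For any measurable u : [0,τ] → U and any x₀ ∈ X₀, the solution x(τ) of ẋ = Ax + b + u(t), x(0) = x₀, satisfies x(τ) ∈ e^{Aτ}X₀ ⊕ {G(A,τ)b} ⊕ τU ⊕ B_{β_τ}, where G(A,τ) = ∫₀^τ e^{A(τ−s)} ds, β_τ = (e^{τ‖A‖} − 1 − τ‖A‖)·‖A‖^{−1}·max_{u∈U}‖u‖, and B_β is the closed sup-norm ball of radius β. -/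

import Mathlib

open Pointwise MeasureTheory

lemma aux_norm_exp_sub_one_le {𝔸 : Type*} [NormedRing 𝔸] [NormedAlgebra ℝ 𝔸]
    [CompleteSpace 𝔸] (B : 𝔸) :
    ‖NormedSpace.exp B - 1‖ ≤ Real.exp ‖B‖ - 1 := by
  have h := NormedSpace.exp_series_hasSum_exp' (𝕂 := ℝ) B
  have h1 : HasSum (fun k : ℕ => ((Nat.factorial (k + 1) : ℝ)⁻¹ • B ^ (k + 1)))
      (NormedSpace.exp B - 1) := by
    have := (hasSum_nat_add_iff' 1).mpr h
    simpa using this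
  have hr := NormedSpace.exp_series_hasSum_exp' (𝕂 := ℝ) ‖B‖
  have hr1 : HasSum (fun k : ℕ => ((Nat.factorial (k + 1) : ℝ)⁻¹ * ‖B‖ ^ (k + 1)))
      (Real.exp ‖B‖ - 1) := by
    have := (hasSum_nat_add_iff' 1).mpr hr
    simpa [Real.exp_eq_exp_ℝ, smul_eq_mul] using this
  have hbound : ∀ k : ℕ, ‖((Nat.factorial (k + 1) : ℝ)⁻¹ • B ^ (k + 1))‖ ≤
      (Nat.factorial (k + 1) : ℝ)⁻¹ * ‖B‖ ^ (k + 1) := by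
    intro k
    rw [norm_smul, Real.norm_eq_abs, abs_of_nonneg (by positivity)]
    exact mul_le_mul_of_nonneg_left (norm_pow_le' B k.succ_pos) (by positivity)
  exact h1.norm_le_of_bounded hr1 hbound

set_option maxHeartbeats 2000000 in
theorem stmt16 (n : ℕ) (A : (Fin n → ℝ) →L[ℝ] (Fin n → ℝ)) (hA : 0 < ‖A‖)
    (b : Fin n → ℝ) (U X₀ : Set (Fin n → ℝ))
    (hUc : IsCompact U) (hUconv : Convex ℝ U)
    (hX₀c : IsCompact X₀) (hX₀conv : Convex ℝ X₀)
    (τ : ℝ) (hτ : 0 < τ) (u : ℝ → (Fin n → ℝ))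
    (humeas : AEStronglyMeasurable u (volume.restrict (Set.Icc 0 τ)))
    (huU : ∀ s ∈ Set.Icc (0 : ℝ) τ, u s ∈ U)
    (x₀ : Fin n → ℝ) (hx₀ : x₀ ∈ X₀) (x : ℝ → (Fin n → ℝ)) (hx0 : x 0 = x₀)
    (hode : ∀ s ∈ Set.Icc (0 : ℝ) τ, HasDerivAt x (A (x s) + b + u s) s) :
    x τ ∈ (fun y => (NormedSpace.exp (τ • A)) y) '' X₀ +
        {∫ s in (0 : ℝ)..τ, (NormedSpace.exp ((τ - s) • A)) b} +
        (fun v => τ • v) '' U +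
        {z : Fin n → ℝ |
          ‖z‖ ≤ (Real.exp (τ * ‖A‖) - 1 - τ * ‖A‖) * ‖A‖⁻¹ * sSup (norm '' U)} := by
  let +nondep : NormedAlgebra ℚ ((Fin n → ℝ) →L[ℝ] (Fin n → ℝ)) := .restrictScalars ℚ ℝ _
  set M : ℝ := sSup (norm '' U) with hMdef
  set G : ℝ → ((Fin n → ℝ) →L[ℝ] (Fin n → ℝ)) := fun s => NormedSpace.exp ((-s) • A) with hGdef
  have hMb : ∀ v ∈ U, ‖v‖ ≤ M := fun v hv =>
    le_csSup ((hUc.image continuous_norm).bddAbove) ⟨v, hv, rfl⟩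
  have hM0 : 0 ≤ M := le_trans (norm_nonneg _) (hMb (u 0) (huU 0 ⟨le_refl _, hτ.le⟩))
  -- continuity of G
  have hcontG : Continuous G :=
    NormedSpace.exp_continuous.comp ((continuous_neg.comp continuous_id).smul continuous_const)
  have hGb : Continuous fun s => G s b :=
    isBoundedBilinearMap_apply.continuous.comp (hcontG.prodMk continuous_const)
  have hcontE : Continuous fun s => NormedSpace.exp ((τ - s) • A) :=
    NormedSpace.exp_continuous.comp ((continuous_const.sub continuous_id).smul continuous_const)
  have hcontE1 : Continuous fun s => NormedSpace.exp ((τ - s) • A) - 1 :=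
    hcontE.sub continuous_const
  have hEb : Continuous fun s => NormedSpace.exp ((τ - s) • A) b :=
    isBoundedBilinearMap_apply.continuous.comp (hcontE.prodMk continuous_const)
  -- measurability of u on Ioc
  have humeas' : AEStronglyMeasurable u (volume.restrict (Set.Ioc 0 τ)) :=
    humeas.mono_measure (Measure.restrict_mono Set.Ioc_subset_Icc_self le_rfl)
  -- generic integrability helper
  have key : ∀ Φ : ℝ → ((Fin n → ℝ) →L[ℝ] (Fin n → ℝ)), Continuous Φ →
      IntegrableOn (fun s => Φ s (u s)) (Set.Ioc 0 τ) volume := by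
    intro Φ hΦ
    obtain ⟨C, hC⟩ := (isCompact_Icc (a := (0:ℝ)) (b := τ)).exists_bound_of_continuousOn
      hΦ.continuousOn
    have hC0 : 0 ≤ C := le_trans (norm_nonneg _) (hC 0 ⟨le_refl _, hτ.le⟩)
    have hmeas : AEStronglyMeasurable (fun s => Φ s (u s))
        (volume.restrict (Set.Ioc 0 τ)) := by
      exact isBoundedBilinearMap_apply.continuous.comp_aestronglyMeasurable
        ((hΦ.aestronglyMeasurable).prodMk humeas')
    refine Integrable.mono' (integrable_const (C * M)) hmeas ?_
    filter_upwards [ae_restrict_mem measurableSet_Ioc] with s hs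
    calc ‖Φ s (u s)‖ ≤ ‖Φ s‖ * ‖u s‖ := (Φ s).le_opNorm _
      _ ≤ C * M := mul_le_mul (hC s (Set.Ioc_subset_Icc_self hs))
          (hMb _ (huU s (Set.Ioc_subset_Icc_self hs))) (norm_nonneg _) hC0
  have keyI : ∀ Φ : ℝ → ((Fin n → ℝ) →L[ℝ] (Fin n → ℝ)), Continuous Φ →
      IntervalIntegrable (fun s => Φ s (u s)) volume 0 τ := by
    intro Φ hΦ
    rw [intervalIntegrable_iff_integrableOn_Ioc_of_le hτ.le]
    exact key Φ hΦ
  have hu_int : IntegrableOn u (Set.Ioc 0 τ) volume := by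
    have := key (fun _ => ContinuousLinearMap.id ℝ (Fin n → ℝ)) continuous_const
    simpa using this
  have hu_intI : IntervalIntegrable u volume 0 τ := by
    rw [intervalIntegrable_iff_integrableOn_Ioc_of_le hτ.le]; exact hu_int
  -- derivative of G
  have hGd : ∀ s : ℝ, HasDerivAt G (-(A * G s)) s := by
    intro s
    have h1 : HasDerivAt (fun t : ℝ => NormedSpace.exp (t • A))
        (A * NormedSpace.exp ((-s) • A)) (-s) := hasDerivAt_exp_smul_const' A (-s)
    have h2 : HasDerivAt (fun t : ℝ => -t) (-1) s := (hasDerivAt_id s).neg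
    have := HasDerivAt.scomp s h1 h2
    simpa [Function.comp_def, hGdef, neg_smul] using this
  -- commutation
  have hcomm : ∀ s : ℝ, Commute A (G s) :=
    fun s => ((Commute.refl A).smul_right (-s)).exp_right
  -- derivative of y := fun t => G t (x t)
  have hyd : ∀ s ∈ Set.Icc (0 : ℝ) τ,
      HasDerivAt (fun t => G t (x t)) (G s b + G s (u s)) s := by
    intro s hs
    have h := (hGd s).clm_apply (hode s hs)
    refine HasDerivAt.congr_deriv h ?_
    have h2 : (G s) (A (x s)) = A ((G s) (x s)) := by
      have : G s * A = A * G s := (hcomm s).symm.eq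
      calc (G s) (A (x s)) = (G s * A) (x s) := rfl
        _ = (A * G s) (x s) := by rw [this]
        _ = A ((G s) (x s)) := rfl
    simp only [map_add, h2, ContinuousLinearMap.neg_apply, ContinuousLinearMap.mul_apply]
    abel
  -- FTC
  have hderint : IntervalIntegrable (fun s => G s b + G s (u s)) volume 0 τ := by
    exact IntervalIntegrable.add (hGb.intervalIntegrable 0 τ) (keyI G hcontG)
  have hftc : (∫ s in (0:ℝ)..τ, (G s b + G s (u s))) = G τ (x τ) - G 0 (x 0) :=
    intervalIntegral.integral_eq_sub_of_hasDerivAt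
      (fun s hs => hyd s (by rwa [Set.uIcc_of_le hτ.le] at hs)) hderint
  have hG0 : G 0 (x 0) = x₀ := by simp [hGdef, NormedSpace.exp_zero, hx0]
  -- x τ = exp(τ•A) (G τ (x τ))
  have hcommτ : Commute (τ • A) ((-τ) • A) :=
    ((Commute.refl A).smul_right (-τ)).smul_left τ
  have hinv : NormedSpace.exp (τ • A) * G τ = 1 := by
    rw [hGdef, ← NormedSpace.exp_add_of_commute hcommτ]
    have : τ • A + (-τ) • A = 0 := by rw [← add_smul]; simp
    rw [this, NormedSpace.exp_zero]
  have hxτ : x τ = NormedSpace.exp (τ • A) (G τ (x τ)) := by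
    have : (NormedSpace.exp (τ • A) * G τ) (x τ) = x τ := by rw [hinv]; rfl
    exact this.symm
  -- exp(τ•A) ∘ G s = exp((τ-s)•A)
  have hGs : ∀ (s : ℝ) (v : Fin n → ℝ),
      NormedSpace.exp (τ • A) ((G s) v) = NormedSpace.exp ((τ - s) • A) v := by
    intro s v
    have hc : Commute (τ • A) ((-s) • A) := ((Commute.refl A).smul_right (-s)).smul_left τ
    have : NormedSpace.exp ((τ - s) • A) = NormedSpace.exp (τ • A) * G s := by
      rw [hGdef, ← NormedSpace.exp_add_of_commute hc]
      congr 1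
      module
    rw [this]; rfl
  -- variation of constants
  have hvar : x τ = NormedSpace.exp (τ • A) x₀ +
      (∫ s in (0:ℝ)..τ, NormedSpace.exp ((τ - s) • A) b) +
      (∫ s in (0:ℝ)..τ, NormedSpace.exp ((τ - s) • A) (u s)) := by
    have h1 : G τ (x τ) = x₀ + ∫ s in (0:ℝ)..τ, (G s b + G s (u s)) := by
      rw [hftc, hG0]; abel
    rw [hxτ, h1, map_add, add_assoc]
    congr 1
    rw [← (NormedSpace.exp (τ • A)).intervalIntegral_comp_comm hderint]
    rw [← intervalIntegral.integral_add (hEb.intervalIntegrable 0 τ) (keyI _ hcontE)]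
    congr 1
    ext s
    rw [map_add, hGs, hGs]
  -- split control integral
  have hsplit : (∫ s in (0:ℝ)..τ, NormedSpace.exp ((τ - s) • A) (u s)) =
      (∫ s in (0:ℝ)..τ, u s) +
      (∫ s in (0:ℝ)..τ, (NormedSpace.exp ((τ - s) • A) - 1) (u s)) := by
    rw [← intervalIntegral.integral_add hu_intI (keyI _ hcontE1)]
    congr 1
    ext s
    simp [ContinuousLinearMap.sub_apply]
  -- the average belongs to U
  haveI hfin : IsFiniteMeasure (volume.restrict (Set.Ioc 0 τ)) := by
    constructor
    rw [Measure.restrict_apply_univ, Real.volume_Ioc]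
    exact ENNReal.ofReal_lt_top
  haveI hne : NeZero (volume.restrict (Set.Ioc 0 τ)) := by
    constructor
    intro h
    have := congrArg (fun μ : Measure ℝ => μ Set.univ) h
    simp [Real.volume_Ioc, ENNReal.ofReal_eq_zero, hτ, not_le.mpr hτ] at this
  set v : Fin n → ℝ := ⨍ s, u s ∂(volume.restrict (Set.Ioc 0 τ)) with hvdef
  have hvU : v ∈ U := by
    refine hUconv.average_mem hUc.isClosed ?_ hu_int
    filter_upwards [ae_restrict_mem measurableSet_Ioc] with s hs
    exact huU s (Set.Ioc_subset_Icc_self hs)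
  have huint_eq : (∫ s in (0:ℝ)..τ, u s) = τ • v := by
    rw [hvdef, average_eq]
    rw [measureReal_restrict_apply_univ, Real.volume_real_Ioc_of_le hτ.le, sub_zero,
      smul_smul, mul_inv_cancel₀ hτ.ne', one_smul,
      intervalIntegral.integral_of_le hτ.le]
  -- norm bound on the remainder
  set r : Fin n → ℝ := ∫ s in (0:ℝ)..τ, (NormedSpace.exp ((τ - s) • A) - 1) (u s) with hrdef
  have hg_int : IntervalIntegrable (fun s => (Real.exp ((τ - s) * ‖A‖) - 1) * M)
      volume 0 τ :=
    Continuous.intervalIntegrable (by fun_prop) 0 τ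
  have hg_val : (∫ s in (0:ℝ)..τ, (Real.exp ((τ - s) * ‖A‖) - 1) * M) =
      (Real.exp (τ * ‖A‖) - 1 - τ * ‖A‖) * ‖A‖⁻¹ * M := by
    have hFd : ∀ s ∈ Set.uIcc (0:ℝ) τ, HasDerivAt
        (fun s => (-(Real.exp ((τ - s) * ‖A‖)) * ‖A‖⁻¹ - s) * M)
        ((Real.exp ((τ - s) * ‖A‖) - 1) * M) s := by
      intro s _
      have h1 : HasDerivAt (fun s : ℝ => (τ - s) * ‖A‖) ((-1) * ‖A‖) s :=
        ((hasDerivAt_id s).const_sub τ).mul_const ‖A‖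
      have h2 : HasDerivAt (fun s : ℝ => Real.exp ((τ - s) * ‖A‖))
          (Real.exp ((τ - s) * ‖A‖) * ((-1) * ‖A‖)) s :=
        (Real.hasDerivAt_exp _).comp s h1
      have h3 := ((h2.neg.mul_const ‖A‖⁻¹).sub (hasDerivAt_id s)).mul_const M
      refine HasDerivAt.congr_deriv h3 ?_
      simp only [neg_mul, one_mul, mul_neg, neg_neg, mul_assoc, mul_inv_cancel₀ hA.ne', mul_one]
    rw [intervalIntegral.integral_eq_sub_of_hasDerivAt hFd hg_int]
    field_simp
    simp only [sub_self, mul_zero, zero_mul, sub_zero, Real.exp_zero, mul_comm ‖A‖ τ]; ring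
  have hrbound : ‖r‖ ≤ (Real.exp (τ * ‖A‖) - 1 - τ * ‖A‖) * ‖A‖⁻¹ * M := by
    have hb : ∀ᵐ s ∂(volume.restrict (Set.uIoc (0:ℝ) τ)),
        ‖(NormedSpace.exp ((τ - s) • A) - 1) (u s)‖ ≤
        (Real.exp ((τ - s) * ‖A‖) - 1) * M := by
      rw [Set.uIoc_of_le hτ.le]
      filter_upwards [ae_restrict_mem measurableSet_Ioc] with s hs
      have h1 : ‖(NormedSpace.exp ((τ - s) • A) - 1) (u s)‖ ≤
          ‖NormedSpace.exp ((τ - s) • A) - 1‖ * ‖u s‖ :=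
        (NormedSpace.exp ((τ - s) • A) - 1).le_opNorm _
      have h2 : ‖NormedSpace.exp ((τ - s) • A) - 1‖ ≤
          Real.exp ((τ - s) * ‖A‖) - 1 := by
        refine (aux_norm_exp_sub_one_le ((τ - s) • A)).trans ?_
        rw [norm_smul_of_nonneg (by linarith [hs.2] : (0:ℝ) ≤ τ - s) A]
      refine h1.trans ?_
      have h3 : (0:ℝ) ≤ Real.exp ((τ - s) * ‖A‖) - 1 := by
        have : (1:ℝ) ≤ Real.exp ((τ - s) * ‖A‖) :=
          Real.one_le_exp (mul_nonneg (by linarith [hs.2]) hA.le)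
        linarith
      exact mul_le_mul h2 (hMb _ (huU s (Set.Ioc_subset_Icc_self hs))) (norm_nonneg _) h3
    have := intervalIntegral.norm_integral_le_abs_of_norm_le hb hg_int
    rw [hg_val] at this
    refine this.trans ?_
    rw [abs_of_nonneg]
    have hβ : (0:ℝ) ≤ Real.exp (τ * ‖A‖) - 1 - τ * ‖A‖ := by
      have := Real.add_one_le_exp (τ * ‖A‖)
      linarith
    positivity
  -- assemble
  have hfinal : x τ = NormedSpace.exp (τ • A) x₀ +
      (∫ s in (0:ℝ)..τ, NormedSpace.exp ((τ - s) • A) b) + τ • v + r := by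
    rw [hvar, hsplit, huint_eq, hrdef]
    abel
  rw [hfinal]
  refine Set.add_mem_add (Set.add_mem_add (Set.add_mem_add ?_ rfl) ?_) ?_
  · exact ⟨x₀, hx₀, rfl⟩
  · exact ⟨v, hvU, rfl⟩
  · exact hrbound
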